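/- If a Lebesgue measurable, square integrable matrix function R : ℝ≥0 → Matrix (Fin l1) (Fin l2) ℝ satisfies the (L, ϑ)-persistency of excitation condition, i.e. ∫_t^{t+L} R(s) R(s)ᵀ ds ≥ ϑ • I for all t ≥ 0 with L, ϑ > 0, then for every ℓ ≥ L and every t ≥ 0 one has ∫_t^{t+ℓ} R(s) R(s)ᵀ ds ≥ (ϑ ℓ / (2L)) • I (inequality in the Loewner order on symmetric matrices). -/

import Mathlib

open MeasureTheory Matrix

attribute [local instance] Matrix.normedAddCommGroup Matrix.normedSpace

section Aux

variable {l1 : ℕ}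

/-- The quadratic form `M ↦ xᵀ M x` as a continuous linear map on matrices. -/
noncomputable def quadCLM (x : Fin l1 → ℝ) :
    Matrix (Fin l1) (Fin l1) ℝ →L[ℝ] ℝ :=
  LinearMap.toContinuousLinearMap
    { toFun := fun M => dotProduct (star x) (M *ᵥ x)
      map_add' := by
        intro M N; simp [Matrix.add_mulVec, dotProduct_add]
      map_smul' := by
        intro c M; simp [Matrix.smul_mulVec, dotProduct_smul] }

@[simp] lemma quadCLM_apply (x : Fin l1 → ℝ) (M : Matrix (Fin l1) (Fin l1) ℝ) :
    quadCLM x M = dotProduct (star x) (M *ᵥ x) := rfl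

/-- Entry extraction as a continuous linear map on matrices. -/
noncomputable def entryCLM (i j : Fin l1) :
    Matrix (Fin l1) (Fin l1) ℝ →L[ℝ] ℝ :=
  LinearMap.toContinuousLinearMap
    { toFun := fun M => M i j
      map_add' := fun _ _ => rfl
      map_smul' := fun _ _ => rfl }

@[simp] lemma entryCLM_apply (i j : Fin l1) (M : Matrix (Fin l1) (Fin l1) ℝ) :
    entryCLM i j M = M i j := rfl

/-- An interval integral of pointwise positive semidefinite matrices is positive
semidefinite. -/
lemma posSemidef_intervalIntegral (f : ℝ → Matrix (Fin l1) (Fin l1) ℝ)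
    (hf : ∀ s, (f s).PosSemidef) {a b : ℝ} (hab : a ≤ b)
    (hint : @IntervalIntegrable _ _ NormedAddGroup.toENormedAddMonoid f volume a b) :
    (∫ s in a..b, f s).PosSemidef := by
  rw [Matrix.posSemidef_iff_dotProduct_mulVec]
  constructor
  · ext i j
    have h1 : ∫ u in a..b, entryCLM j i (f u) = entryCLM j i (∫ u in a..b, f u) :=
      (entryCLM j i).intervalIntegral_comp_comm hint
    have h2 : ∫ u in a..b, entryCLM i j (f u) = entryCLM i j (∫ u in a..b, f u) :=
      (entryCLM i j).intervalIntegral_comp_comm hint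
    simp only [entryCLM_apply] at h1 h2
    have hptwise : ∀ s, f s j i = f s i j := by
      intro s
      have := congrFun (congrFun (hf s).1 j) i
      simpa [Matrix.conjTranspose_apply] using this.symm
    simp only [Matrix.conjTranspose_apply, star_trivial]
    rw [← h1, ← h2]
    exact intervalIntegral.integral_congr fun s _ => hptwise s
  · intro x
    have h1 : ∫ u in a..b, quadCLM x (f u) = quadCLM x (∫ u in a..b, f u) :=
      (quadCLM x).intervalIntegral_comp_comm hint
    simp only [quadCLM_apply, star_trivial] at h1 ⊢
    rw [← h1]
    exact intervalIntegral.integral_nonneg hab fun u _ => (hf u).dotProduct_mulVec_nonneg x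

lemma posSemidef_smul_one {c : ℝ} (hc : 0 ≤ c) :
    (c • (1 : Matrix (Fin l1) (Fin l1) ℝ)).PosSemidef := by
  exact Matrix.PosSemidef.one.smul hc

lemma posSemidef_add {A B : Matrix (Fin l1) (Fin l1) ℝ}
    (hA : A.PosSemidef) (hB : B.PosSemidef) : (A + B).PosSemidef := by
  exact hA.add hB

end Aux

set_option maxHeartbeats 1000000 in
/-- Lemma A1: if a Lebesgue measurable, square integrable matrix function `R` is
`(L, ϑ)`-persistently exciting, then for every `ℓ ≥ L` and `t ≥ 0`,
`∫_t^{t+ℓ} R(s) R(s)ᵀ ds ≥ (ϑ ℓ / (2 L)) • I` in the Loewner order. -/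
theorem pe_lower_bound_on_long_intervals {l1 l2 : ℕ}
    (R : ℝ → Matrix (Fin l1) (Fin l2) ℝ) (L ϑ : ℝ)
    (hL : 0 < L) (hϑ : 0 < ϑ)
    (hmeas : ∀ i j, Measurable fun s => R s i j)
    (hsq : ∀ t : ℝ, 0 ≤ t → @IntervalIntegrable _ _ NormedAddGroup.toENormedAddMonoid
      (fun s => (R s * (R s)ᵀ : Matrix (Fin l1) (Fin l1) ℝ)) volume t (t + L))
    (hPE : ∀ t : ℝ, 0 ≤ t →
      ((∫ s in t..(t + L), (R s * (R s)ᵀ : Matrix (Fin l1) (Fin l1) ℝ)) -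
        ϑ • (1 : Matrix (Fin l1) (Fin l1) ℝ)).PosSemidef) :
    ∀ ℓ : ℝ, L ≤ ℓ → ∀ t : ℝ, 0 ≤ t →
      ((∫ s in t..(t + ℓ), (R s * (R s)ᵀ : Matrix (Fin l1) (Fin l1) ℝ)) -
        (ϑ * ℓ / (2 * L)) • (1 : Matrix (Fin l1) (Fin l1) ℝ)).PosSemidef := by
  set f : ℝ → Matrix (Fin l1) (Fin l1) ℝ := fun s => R s * (R s)ᵀ with hf
  have hfpsd : ∀ s, (f s).PosSemidef := by
    intro s
    have := Matrix.posSemidef_self_mul_conjTranspose (R s)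
    simpa [hf, Matrix.conjTranspose_eq_transpose_of_trivial] using this
  -- induction: integral over n consecutive windows
  have key : ∀ n : ℕ, ∀ t : ℝ, 0 ≤ t →
      @IntervalIntegrable _ _ NormedAddGroup.toENormedAddMonoid f volume t (t + n * L) ∧
      ((∫ s in t..(t + n * L), f s) -
        ((n : ℝ) * ϑ) • (1 : Matrix (Fin l1) (Fin l1) ℝ)).PosSemidef := by
    intro n
    induction n with
    | zero =>
      intro t ht
      simp only [Nat.cast_zero, zero_mul, add_zero, zero_smul, sub_zero,
        intervalIntegral.integral_same]
      exact ⟨IntervalIntegrable.refl, Matrix.PosSemidef.zero⟩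
    | succ n ih =>
      intro t ht
      have ht' : (0 : ℝ) ≤ t + L := by linarith
      obtain ⟨ihInt, ihPsd⟩ := ih (t + L) ht'
      have hcast : t + (n + 1 : ℕ) * L = (t + L) + n * L := by push_cast; ring
      have hInt1 : @IntervalIntegrable _ _ NormedAddGroup.toENormedAddMonoid f volume t (t + L) := hsq t ht
      have hIntAll : @IntervalIntegrable _ _ NormedAddGroup.toENormedAddMonoid f volume t (t + (n + 1 : ℕ) * L) := by
        rw [hcast]; exact hInt1.trans ihInt
      refine ⟨hIntAll, ?_⟩
      have hsplit : (∫ s in t..(t + (n + 1 : ℕ) * L), f s) =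
          (∫ s in t..(t + L), f s) + (∫ s in (t + L)..((t + L) + n * L), f s) := by
        rw [hcast]
        exact (intervalIntegral.integral_add_adjacent_intervals hInt1 ihInt).symm
      rw [hsplit]
      have := posSemidef_add (hPE t ht) ihPsd
      have heq : (∫ s in t..(t + L), f s) + (∫ s in (t + L)..((t + L) + n * L), f s) -
          (((n : ℕ) + 1 : ℝ) * ϑ) • (1 : Matrix (Fin l1) (Fin l1) ℝ) =
          ((∫ s in t..(t + L), f s) - ϑ • (1 : Matrix (Fin l1) (Fin l1) ℝ)) +
          ((∫ s in (t + L)..((t + L) + n * L), f s) -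
            ((n : ℝ) * ϑ) • (1 : Matrix (Fin l1) (Fin l1) ℝ)) := by
        rw [add_mul, one_mul, add_smul]
        abel
      rw [show ((n + 1 : ℕ) : ℝ) = ((n : ℕ) + 1 : ℝ) by push_cast; ring, heq]
      exact this
  intro ℓ hℓ t ht
  set n : ℕ := ⌊ℓ / L⌋₊ with hn
  have hℓpos : 0 < ℓ := lt_of_lt_of_le hL hℓ
  have hn1 : 1 ≤ n := Nat.le_floor (by push_cast; rw [le_div_iff₀ hL]; linarith)
  have hnL : (n : ℝ) * L ≤ ℓ := by
    have := Nat.floor_le (a := ℓ / L) (by positivity)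
    calc (n : ℝ) * L ≤ (ℓ / L) * L := by
          apply mul_le_mul_of_nonneg_right this hL.le
      _ = ℓ := by field_simp
  have hℓlt : ℓ < (n + 1 : ℝ) * L := by
    have := Nat.lt_floor_add_one (ℓ / L)
    calc ℓ = (ℓ / L) * L := by field_simp
      _ < ((n : ℝ) + 1) * L := by
          apply mul_lt_mul_of_pos_right this hL
  obtain ⟨hIntn, hPsdn⟩ := key n t ht
  -- integrability of tail
  have htail0 : (0 : ℝ) ≤ t + n * L := by positivity
  have htailInt : @IntervalIntegrable _ _ NormedAddGroup.toENormedAddMonoid f volume (t + n * L) (t + ℓ) := by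
    refine (hsq (t + n * L) htail0).mono_set ?_
    apply Set.uIcc_subset_uIcc
    · exact Set.mem_uIcc.2 (Or.inl ⟨le_refl _, by linarith⟩)
    · exact Set.mem_uIcc.2 (Or.inl ⟨by linarith, by linarith⟩)
  have htailPsd : (∫ s in (t + n * L)..(t + ℓ), f s).PosSemidef :=
    posSemidef_intervalIntegral f hfpsd (by linarith) htailInt
  have hsplit : (∫ s in t..(t + ℓ), f s) =
      (∫ s in t..(t + n * L), f s) + (∫ s in (t + n * L)..(t + ℓ), f s) :=
    (intervalIntegral.integral_add_adjacent_intervals hIntn htailInt).symm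
  -- scalar inequality : ϑ ℓ / (2L) ≤ n ϑ
  have hscal : ϑ * ℓ / (2 * L) ≤ (n : ℝ) * ϑ := by
    rw [div_le_iff₀ (by positivity)]
    have h2n : ℓ ≤ 2 * ((n : ℝ) * L) := by
      have : (n : ℝ) + 1 ≤ 2 * n := by
        have : (1 : ℝ) ≤ (n : ℝ) := by exact_mod_cast hn1
        linarith
      nlinarith
    nlinarith
  have hcI : ((n : ℝ) * ϑ - ϑ * ℓ / (2 * L)) ≥ 0 := by linarith
  have heq : (∫ s in t..(t + ℓ), f s) -
      (ϑ * ℓ / (2 * L)) • (1 : Matrix (Fin l1) (Fin l1) ℝ) =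
      (((∫ s in t..(t + n * L), f s) - ((n : ℝ) * ϑ) • (1 : Matrix (Fin l1) (Fin l1) ℝ)) +
        (∫ s in (t + n * L)..(t + ℓ), f s)) +
      ((n : ℝ) * ϑ - ϑ * ℓ / (2 * L)) • (1 : Matrix (Fin l1) (Fin l1) ℝ) := by
    rw [hsplit, sub_smul]
    abel
  rw [heq]
  exact posSemidef_add (posSemidef_add hPsdn htailPsd) (posSemidef_smul_one hcI)
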